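/- Let f, g, h be holomorphic on an open disc D ⊆ ℂ centered at 0, none of them identically zero. Then f, g, h satisfy the A₂ functional equation f(u)g(u+v) + g(v)h(−u) + h(−u−v)f(−v) = 0 for all u, v with u, v, u+v ∈ D if and only if there exist nonzero constants a, b, c ∈ ℂ with ab + bc + ca = 0 and constants α, β, γ ∈ ℂ with α + β + γ = 0 such that f(u) = a·e^{αu}, g(u) = b·e^{βu}, h(u) = c·e^{γu} for all u ∈ D. -/

import Mathlib

/-!
STATEMENT 13: The non-trivial holomorphic solutions of the `A₂` functional
equation `f(u)g(u+v) + g(v)h(−u) + h(−u−v)f(−v) = 0` on a disc centered at `0`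
are exactly the exponential solutions `f = a·e^{αu}`, `g = b·e^{βu}`,
`h = c·e^{γu}` with `ab + bc + ca = 0` and `α + β + γ = 0`.
-/

open Metric

section A2Aux

open Filter

/-- Identity theorem helper: if a product of two analytic functions vanishes on a ball and the
first factor is nonzero somewhere, the second vanishes identically. -/
lemma a2_aux_mul_zero {r : ℝ} {p q : ℂ → ℂ}
    (hp : AnalyticOnNhd ℂ p (ball (0:ℂ) r)) (hq : AnalyticOnNhd ℂ q (ball (0:ℂ) r))
    (hpq : ∀ z ∈ ball (0:ℂ) r, p z * q z = 0)
    {z₁ : ℂ} (hz₁ : z₁ ∈ ball (0:ℂ) r) (hpz : p z₁ ≠ 0) :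
    Set.EqOn q 0 (ball (0:ℂ) r) := by
  have h1 : ∀ᶠ z in nhds z₁, p z ≠ 0 := (hp z₁ hz₁).continuousAt.eventually_ne hpz
  have h2 : ∀ᶠ z in nhds z₁, z ∈ ball (0:ℂ) r := isOpen_ball.eventually_mem hz₁
  have h3 : q =ᶠ[nhds z₁] 0 := by
    filter_upwards [h1, h2] with z hz hzb
    rcases mul_eq_zero.1 (hpq z hzb) with h | h
    · exact absurd h hz
    · exact h
  exact hq.eqOn_zero_of_preconnected_of_eventuallyEq_zero
    (convex_ball (0:ℂ) r).isPreconnected hz₁ h3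

/-- Multiplicative holomorphic functions on a ball are exponentials. -/
lemma a2_aux_exp {r : ℝ} (hr : 0 < r) {φ : ℂ → ℂ} {d : ℂ}
    (hφ : DifferentiableOn ℂ φ (ball (0:ℂ) r))
    (hd : φ 0 = d) (hd0 : d ≠ 0)
    (hmul : ∀ u v : ℂ, u ∈ ball (0:ℂ) r → v ∈ ball (0:ℂ) r → u + v ∈ ball (0:ℂ) r →
      φ u * φ v = d * φ (u + v)) :
    ∀ u ∈ ball (0:ℂ) r, φ u = d * Complex.exp ((deriv φ 0 / d) * u) := by
  have h0m : (0:ℂ) ∈ ball (0:ℂ) r := mem_ball_self hr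
  set α : ℂ := deriv φ 0 / d with hα
  have hφ0 : HasDerivAt φ (deriv φ 0) 0 :=
    (hφ.differentiableAt (isOpen_ball.mem_nhds h0m)).hasDerivAt
  have hder : ∀ u ∈ ball (0:ℂ) r, HasDerivAt φ (α * φ u) u := by
    intro u hu
    have hev : φ =ᶠ[nhds u] fun z => d⁻¹ * (φ u * φ (z - u)) := by
      have h1 : ∀ᶠ z in nhds u, z ∈ ball (0:ℂ) r := isOpen_ball.eventually_mem hu
      have h2 : ∀ᶠ z in nhds u, z - u ∈ ball (0:ℂ) r := by
        have hc : ContinuousAt (fun z : ℂ => z - u) u :=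
          (continuous_id.sub continuous_const).continuousAt
        have hm : (fun z : ℂ => z - u) u ∈ ball (0:ℂ) r := by simpa using h0m
        exact hc.eventually_mem (isOpen_ball.mem_nhds hm)
      filter_upwards [h1, h2] with z hz1 hz2
      have e : u + (z - u) = z := by ring
      have h3 := hmul u (z - u) hu hz2 (by rwa [e])
      rw [e] at h3
      rw [h3, inv_mul_cancel_left₀ hd0]
    have hsub : HasDerivAt (fun z : ℂ => z - u) 1 u := (hasDerivAt_id u).sub_const u
    have hcomp : HasDerivAt (fun z => φ (z - u)) (deriv φ 0) u := by
      have h4 : HasDerivAt φ (deriv φ 0) ((fun z : ℂ => z - u) u) := by simpa using hφ0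
      have h4' : HasDerivAt (fun z : ℂ => φ (z - u)) (deriv φ 0 * 1) u :=
        HasDerivAt.comp u h4 hsub
      simpa using h4'
    have h5 : HasDerivAt (fun z => d⁻¹ * (φ u * φ (z - u))) (d⁻¹ * (φ u * deriv φ 0)) u :=
      (hcomp.const_mul (φ u)).const_mul d⁻¹
    have h6 := h5.congr_of_eventuallyEq hev
    refine h6.congr_deriv ?_
    rw [hα, div_eq_mul_inv]
    ring
  intro u hu
  have hχdiff : DifferentiableOn ℂ (fun z => φ z * Complex.exp (-α * z)) (ball (0:ℂ) r) :=
    hφ.mul ((Complex.differentiable_exp.comp (differentiable_id.const_mul (-α))).differentiableOn)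
  have hχ0 : ∀ z ∈ ball (0:ℂ) r,
      fderivWithin ℂ (fun z => φ z * Complex.exp (-α * z)) (ball (0:ℂ) r) z = 0 := by
    intro z hz
    have h1 : HasDerivAt (fun z : ℂ => Complex.exp (-α * z)) (Complex.exp (-α * z) * -α) z := by
      have h0 : HasDerivAt (fun z : ℂ => -α * z) (-α) z := by
        simpa using (hasDerivAt_id z).const_mul (-α)
      have h1' : HasDerivAt (fun z : ℂ => Complex.exp (-α * z))
          (Complex.exp (-α * z) * -α) z := HasDerivAt.comp z (Complex.hasDerivAt_exp (-α * z)) h0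
      exact h1'
    have h2 := (hder z hz).mul h1
    have h3 : HasDerivAt (fun z => φ z * Complex.exp (-α * z)) 0 z := by
      refine h2.congr_deriv ?_; ring
    have h4 := h3.hasFDerivAt.hasFDerivWithinAt.fderivWithin (isOpen_ball.uniqueDiffWithinAt hz)
    rw [h4]
    ext
    simp
  have hconst := (convex_ball (0:ℂ) r).is_const_of_fderivWithin_eq_zero hχdiff hχ0 h0m hu
  have h7 : d = φ u * Complex.exp (-α * u) := by simpa [hd] using hconst
  have h8 : d * Complex.exp (α * u) = φ u := by
    rw [h7, mul_assoc, ← Complex.exp_add, show -α * u + α * u = 0 by ring,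
      Complex.exp_zero, mul_one]
  exact h8.symm

/-- Pure field algebra: the cocycle argument forcing multiplicativity. -/
lemma a2_aux_alg (a c F1 F2 F3 F1' H1 H2 H3 H1' : ℂ)
    (hF2 : F2 ≠ 0) (hF3 : F3 ≠ 0) (hH2 : H2 ≠ 0) (hH3 : H3 ≠ 0) (hac : a + c ≠ 0)
    (hstar1 : F1 * F2 * H3 + H1 * H2 * F3 = (a + c) * (F3 * H3))
    (hstar2 : F1' * F3 * H2 + H1' * H3 * F2 = (a + c) * (F2 * H2))
    (hsqf : F1 * F1' = a ^ 2)
    (hsqh : H1 * H1' = c ^ 2) :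
    F1 * F2 = a * F3 ∧ H1 * H2 = c * H3 := by
  set x : ℂ := F1 * F2 / F3 with hx_def
  set X : ℂ := H1 * H2 / H3 with hX_def
  set y : ℂ := F1' * F3 / F2 with hy_def
  set Y : ℂ := H1' * H3 / H2 with hY_def
  have e1 : x + X = a + c := by
    rw [hx_def, hX_def, div_add_div _ _ hF3 hH3, div_eq_iff (mul_ne_zero hF3 hH3)]
    linear_combination hstar1
  have e2 : y + Y = a + c := by
    rw [hy_def, hY_def, div_add_div _ _ hF2 hH2, div_eq_iff (mul_ne_zero hF2 hH2)]
    linear_combination hstar2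
  have e3 : x * y = a ^ 2 := by
    rw [hx_def, hy_def, div_mul_div_comm, div_eq_iff (mul_ne_zero hF3 hF2)]
    linear_combination F3 * F2 * hsqf
  have e4 : X * Y = c ^ 2 := by
    rw [hX_def, hY_def, div_mul_div_comm, div_eq_iff (mul_ne_zero hH3 hH2)]
    linear_combination H3 * H2 * hsqh
  have e5 : (a + c - x) * (a + c - y) = c ^ 2 := by
    rw [show a + c - x = X by linear_combination -e1,
      show a + c - y = Y by linear_combination -e2]
    exact e4
  have hsum : x + y = 2 * a :=
    mul_left_cancel₀ hac (by linear_combination e3 - e5)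
  have hx : x = a := by
    have h2 : (x - a) ^ 2 = 0 := by linear_combination x * hsum - e3
    exact sub_eq_zero.mp (pow_eq_zero_iff two_ne_zero |>.mp h2)
  have e6 : (a + c - X) * (a + c - Y) = a ^ 2 := by
    rw [show a + c - X = x by linear_combination -e1,
      show a + c - Y = y by linear_combination -e2]
    exact e3
  have hsumX : X + Y = 2 * c :=
    mul_left_cancel₀ hac (by linear_combination e4 - e6)
  have hX : X = c := by
    have h2 : (X - c) ^ 2 = 0 := by linear_combination X * hsumX - e4
    exact sub_eq_zero.mp (pow_eq_zero_iff two_ne_zero |>.mp h2)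
  exact ⟨(div_eq_iff hF3).mp hx, (div_eq_iff hH3).mp hX⟩

end A2Aux

theorem a2_holomorphic_solutions
    (r : ℝ) (hr : 0 < r) (f g h : ℂ → ℂ)
    (hf : DifferentiableOn ℂ f (ball (0 : ℂ) r))
    (hg : DifferentiableOn ℂ g (ball (0 : ℂ) r))
    (hh : DifferentiableOn ℂ h (ball (0 : ℂ) r))
    (hfne : ∃ z ∈ ball (0 : ℂ) r, f z ≠ 0)
    (hgne : ∃ z ∈ ball (0 : ℂ) r, g z ≠ 0)
    (hhne : ∃ z ∈ ball (0 : ℂ) r, h z ≠ 0) :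
    (∀ u v : ℂ, u ∈ ball (0 : ℂ) r → v ∈ ball (0 : ℂ) r →
        u + v ∈ ball (0 : ℂ) r →
        f u * g (u + v) + g v * h (-u) + h (-(u + v)) * f (-v) = 0)
      ↔
    ∃ a b c α β γ : ℂ, a ≠ 0 ∧ b ≠ 0 ∧ c ≠ 0 ∧
      a * b + b * c + c * a = 0 ∧ α + β + γ = 0 ∧
      ∀ u ∈ ball (0 : ℂ) r,
        f u = a * Complex.exp (α * u) ∧
        g u = b * Complex.exp (β * u) ∧
        h u = c * Complex.exp (γ * u) := by
  have h0m : (0:ℂ) ∈ ball (0:ℂ) r := mem_ball_self hr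
  have hneg : ∀ {z : ℂ}, z ∈ ball (0:ℂ) r → -z ∈ ball (0:ℂ) r := by
    intro z hz; simpa [mem_ball_zero_iff] using hz
  constructor
  · -- forward direction
    intro heq
    obtain ⟨zf, hzf, hzf0⟩ := hfne
    obtain ⟨zg, hzg, hzg0⟩ := hgne
    obtain ⟨zh, hzh, hzh0⟩ := hhne
    set a := f 0 with ha_def
    set b := g 0 with hb_def
    set c := h 0 with hc_def
    have hC : ∀ u ∈ ball (0:ℂ) r, f u * g u = -(a + b) * h (-u) := by
      intro u hu
      have e := heq u 0 hu h0m (by simpa using hu)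
      simp only [add_zero, neg_zero] at e
      linear_combination e
    have hD : ∀ v ∈ ball (0:ℂ) r, h (-v) * f (-v) = -(a + c) * g v := by
      intro v hv
      have e := heq 0 v h0m hv (by simpa using hv)
      simp only [zero_add, neg_zero] at e
      linear_combination e
    have hE : ∀ u ∈ ball (0:ℂ) r, g (-u) * h (-u) = -(b + c) * f u := by
      intro u hu
      have e := heq u (-u) hu (hneg hu) (by simpa using h0m)
      simp only [add_neg_cancel, neg_zero, neg_neg] at e
      linear_combination e
    have hF : a * b + b * c + c * a = 0 := by
      have e := heq 0 0 h0m h0m (by simpa using h0m)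
      simp only [add_zero, neg_zero] at e
      linear_combination e
    have hfa : AnalyticOnNhd ℂ f (ball (0:ℂ) r) := hf.analyticOnNhd isOpen_ball
    have hga : AnalyticOnNhd ℂ g (ball (0:ℂ) r) := hg.analyticOnNhd isOpen_ball
    have hha : AnalyticOnNhd ℂ h (ball (0:ℂ) r) := hh.analyticOnNhd isOpen_ball
    have hmapsneg : Set.MapsTo (fun z : ℂ => -z) (ball (0:ℂ) r) (ball (0:ℂ) r) :=
      fun z hz => hneg hz
    have hgnega : AnalyticOnNhd ℂ (fun z => g (-z)) (ball (0:ℂ) r) :=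
      ((hg.comp (differentiable_id.neg.differentiableOn) hmapsneg).analyticOnNhd isOpen_ball)
    have hhnega : AnalyticOnNhd ℂ (fun z => h (-z)) (ball (0:ℂ) r) :=
      ((hh.comp (differentiable_id.neg.differentiableOn) hmapsneg).analyticOnNhd isOpen_ball)
    have hfnega : AnalyticOnNhd ℂ (fun z => f (-z)) (ball (0:ℂ) r) :=
      ((hf.comp (differentiable_id.neg.differentiableOn) hmapsneg).analyticOnNhd isOpen_ball)
    have ha : a ≠ 0 := by
      intro ha0
      have hbc : b * c = 0 := by linear_combination hF - b * ha0 - c * ha0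
      rcases mul_eq_zero.1 hbc with hb0 | hc0
      · have hz : ∀ z ∈ ball (0:ℂ) r, f z * g z = 0 := by
          intro z hz; rw [hC z hz, ha0, hb0]; ring
        exact hzg0 (a2_aux_mul_zero hfa hga hz hzf hzf0 hzg)
      · have hz : ∀ z ∈ ball (0:ℂ) r, h (-z) * f (-z) = 0 := by
          intro z hz; rw [hD z hz, ha0, hc0]; ring
        have := a2_aux_mul_zero hhnega hfnega hz (hneg hzh) (by simpa using hzh0) (hneg hzf)
        simp only [Pi.zero_apply, neg_neg] at this
        exact hzf0 this
    have hb : b ≠ 0 := by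
      intro hb0
      have hca : c * a = 0 := by linear_combination hF - a * hb0 - c * hb0
      rcases mul_eq_zero.1 hca with hc0 | ha0
      · have hz : ∀ z ∈ ball (0:ℂ) r, g (-z) * h (-z) = 0 := by
          intro z hz; rw [hE z hz, hb0, hc0]; ring
        have := a2_aux_mul_zero hgnega hhnega hz (hneg hzg) (by simpa using hzg0) (hneg hzh)
        simp only [Pi.zero_apply, neg_neg] at this
        exact hzh0 this
      · exact ha ha0
    have hc : c ≠ 0 := by
      intro hc0
      have hab : a * b = 0 := by linear_combination hF - b * hc0 - a * hc0
      rcases mul_eq_zero.1 hab with h1 | h1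
      · exact ha h1
      · exact hb h1
    have hab : a + b ≠ 0 := by
      intro h1
      have hz : ∀ z ∈ ball (0:ℂ) r, f z * g z = 0 := by
        intro z hz; rw [hC z hz, h1]; ring
      exact hzg0 (a2_aux_mul_zero hfa hga hz hzf hzf0 hzg)
    have hac : a + c ≠ 0 := by
      intro h1
      have hz : ∀ z ∈ ball (0:ℂ) r, h (-z) * f (-z) = 0 := by
        intro z hz; rw [hD z hz, h1]; ring
      have := a2_aux_mul_zero hhnega hfnega hz (hneg hzh) (by simpa using hzh0) (hneg hzf)
      simp only [Pi.zero_apply, neg_neg] at this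
      exact hzf0 this
    have hbc : b + c ≠ 0 := by
      intro h1
      have hz : ∀ z ∈ ball (0:ℂ) r, g (-z) * h (-z) = 0 := by
        intro z hz; rw [hE z hz, h1]; ring
      have := a2_aux_mul_zero hgnega hhnega hz (hneg hzg) (by simpa using hzg0) (hneg hzh)
      simp only [Pi.zero_apply, neg_neg] at this
      exact hzh0 this
    have hhsq : ∀ u ∈ ball (0:ℂ) r, h (-u) * h u = (a + c) * (b + c) := by
      have htriple : ∀ u ∈ ball (0:ℂ) r,
          f u * ((fun z => g (-z) * (h (-z) * h z - (a + c) * (b + c))) u) = 0 := by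
        intro u hu
        have hEu := hE u hu
        have hDu' := hD (-u) (hneg hu)
        simp only [neg_neg] at hDu'
        simp only
        linear_combination (h u * f u) * hEu - ((b + c) * f u) * hDu'
      have hq2a : AnalyticOnNhd ℂ
          (fun z => g (-z) * (h (-z) * h z - (a + c) * (b + c))) (ball (0:ℂ) r) :=
        hgnega.mul ((hhnega.mul hha).sub analyticOnNhd_const)
      have step1 := a2_aux_mul_zero hfa
        (hgnega.mul ((hhnega.mul hha).sub analyticOnNhd_const)) htriple hzf hzf0
      have hpq2 : ∀ z ∈ ball (0:ℂ) r,
          (fun z => g (-z)) z * ((fun z => h (-z) * h z - (a + c) * (b + c)) z) = 0 := by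
        intro z hz; exact step1 hz
      have step2 := a2_aux_mul_zero hgnega ((hhnega.mul hha).sub analyticOnNhd_const)
        hpq2 (hneg hzg) (by simpa using hzg0)
      intro u hu
      have := step2 hu
      simpa [sub_eq_zero] using this
    have hh_ne : ∀ z ∈ ball (0:ℂ) r, h z ≠ 0 := by
      intro z hz h0
      have := hhsq (-z) (hneg hz)
      rw [neg_neg, h0, zero_mul] at this
      exact (mul_ne_zero hac hbc) this.symm
    have hf_ne : ∀ z ∈ ball (0:ℂ) r, f z ≠ 0 := by
      intro z hz h0
      have := hC z hz
      rw [h0, zero_mul] at this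
      exact (mul_ne_zero (neg_ne_zero.2 hab) (hh_ne _ (hneg hz))) this.symm
    have hg_ne : ∀ z ∈ ball (0:ℂ) r, g z ≠ 0 := by
      intro z hz h0
      have := hC z hz
      rw [h0, mul_zero] at this
      exact (mul_ne_zero (neg_ne_zero.2 hab) (hh_ne _ (hneg hz))) this.symm
    have hsq : ∀ u ∈ ball (0:ℂ) r, f u * f (-u) = (a + b) * (a + c) := by
      intro u hu
      have hCu := hC u hu
      have hDu := hD u hu
      have key : h (-u) * (f u * f (-u)) = h (-u) * ((a + b) * (a + c)) := by
        linear_combination (f u) * hDu - (a + c) * hCu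
      exact mul_left_cancel₀ (hh_ne _ (hneg hu)) key
    have ha2 : (a + b) * (a + c) = a ^ 2 := by linear_combination hF
    have hc2 : (a + c) * (b + c) = c ^ 2 := by linear_combination hF
    have hstar : ∀ u v : ℂ, u ∈ ball (0:ℂ) r → v ∈ ball (0:ℂ) r →
        u + v ∈ ball (0:ℂ) r →
        f u * f v * h (-(u+v)) + h (-u) * h (-v) * f (u+v)
          = (a + c) * (f (u+v) * h (-(u+v))) := by
      intro u v hu hv huv
      have e := heq u v hu hv huv
      have c1 := hC (u+v) huv
      have c2 := hC v hv
      have s2 := hsq v hv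
      have key : (a + b) * (f u * f v * h (-(u+v)) + h (-u) * h (-v) * f (u+v))
          = (a + b) * ((a + c) * (f (u+v) * h (-(u+v)))) := by
        linear_combination (-(f (u+v) * f v)) * e + (f u * f v) * c1
          + (f (u+v) * h (-u)) * c2 + (f (u+v) * h (-(u+v))) * s2
      exact mul_left_cancel₀ hab key
    have hkey : ∀ v w : ℂ, v ∈ ball (0:ℂ) r → w ∈ ball (0:ℂ) r →
        v + w ∈ ball (0:ℂ) r →
        f v * f w = a * f (v + w) ∧ h (-v) * h (-w) = c * h (-(v + w)) := by
      intro v w hv hw hvw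
      have hstar2 := hstar (-v) (v + w) (hneg hv) hvw (by rw [neg_add_cancel_left]; exact hw)
      simp only [neg_add_cancel_left, neg_neg] at hstar2
      exact a2_aux_alg a c (f v) (f w) (f (v+w)) (f (-v)) (h (-v)) (h (-w)) (h (-(v+w))) (h v)
        (hf_ne _ hw) (hf_ne _ hvw) (hh_ne _ (hneg hw)) (hh_ne _ (hneg hvw)) hac
        (hstar v w hv hw hvw) hstar2 ((hsq v hv).trans ha2) ((hhsq v hv).trans hc2)
    -- exponential form for f
    have hfexp := a2_aux_exp hr hf ha_def.symm ha
      (fun u v hu hv huv => (hkey u v hu hv huv).1)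
    -- exponential form for H = h ∘ neg
    have hHdiff : DifferentiableOn ℂ (fun z => h (-z)) (ball (0:ℂ) r) :=
      hh.comp (differentiable_id.neg.differentiableOn) hmapsneg
    have hH0 : (fun z : ℂ => h (-z)) 0 = c := by simp [hc_def]
    have hHexp := a2_aux_exp hr hHdiff hH0 hc
      (fun u v hu hv huv => (hkey u v hu hv huv).2)
    set α : ℂ := deriv f 0 / a with hα_def
    set δ : ℂ := deriv (fun z => h (-z)) 0 / c with hδ_def
    refine ⟨a, b, c, α, δ - α, -δ, ha, hb, hc, hF, by ring, ?_⟩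
    intro u hu
    have hfu : f u = a * Complex.exp (α * u) := hfexp u hu
    have hHu : h (-u) = c * Complex.exp (δ * u) := hHexp u hu
    have hhu : h u = c * Complex.exp (-δ * u) := by
      have := hHexp (-u) (hneg hu)
      simp only [neg_neg] at this
      rw [this, show δ * -u = -δ * u by ring]
    refine ⟨hfu, ?_, hhu⟩
    -- g from the relation f·g = -(a+b)·h(-·)
    have hab' : a * b = -(a + b) * c := by linear_combination hF
    have eadd : Complex.exp (α * u) * Complex.exp ((δ - α) * u) = Complex.exp (δ * u) := by
      rw [← Complex.exp_add]; congr 1; ring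
    have key : f u * g u = f u * (b * Complex.exp ((δ - α) * u)) := by
      rw [hC u hu, hHu, hfu]
      linear_combination (-(Complex.exp (δ * u))) * hab' - (a * b) * eadd
    exact mul_left_cancel₀ (hf_ne u hu) key
  · -- reverse direction
    rintro ⟨a, b, c, α, β, γ, ha, hb, hc, habc, hsum, hval⟩
    intro u v hu hv huv
    have hγ : γ = -α - β := by linear_combination hsum
    have h1 : f u = a * Complex.exp (α * u) := (hval u hu).1
    have h2 : g (u + v) = b * Complex.exp (β * (u + v)) := (hval (u+v) huv).2.1
    have h3 : g v = b * Complex.exp (β * v) := (hval v hv).2.1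
    have h4 : h (-u) = c * Complex.exp (γ * -u) := (hval (-u) (hneg hu)).2.2
    have h5 : h (-(u + v)) = c * Complex.exp (γ * -(u + v)) := (hval (-(u+v)) (hneg huv)).2.2
    have h6 : f (-v) = a * Complex.exp (α * -v) := (hval (-v) (hneg hv)).1
    rw [h1, h2, h3, h4, h5, h6, hγ]
    have e1 : Complex.exp (α * u) * Complex.exp (β * (u + v))
        = Complex.exp ((α + β) * u + β * v) := by
      rw [← Complex.exp_add]; congr 1; ring
    have e2 : Complex.exp (β * v) * Complex.exp ((-α - β) * -u)
        = Complex.exp ((α + β) * u + β * v) := by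
      rw [← Complex.exp_add]; congr 1; ring
    have e3 : Complex.exp ((-α - β) * -(u + v)) * Complex.exp (α * -v)
        = Complex.exp ((α + β) * u + β * v) := by
      rw [← Complex.exp_add]; congr 1; ring
    calc a * Complex.exp (α * u) * (b * Complex.exp (β * (u + v)))
          + b * Complex.exp (β * v) * (c * Complex.exp ((-α - β) * -u))
          + c * Complex.exp ((-α - β) * -(u + v)) * (a * Complex.exp (α * -v))
        = (a * b + b * c + c * a) * Complex.exp ((α + β) * u + β * v) := by
          rw [mul_mul_mul_comm a _ b _, mul_mul_mul_comm b _ c _, mul_mul_mul_comm c _ a _,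
            e1, e2, e3]
          ring
      _ = 0 := by rw [habc, zero_mul]
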